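/- Let R be an algebraic curvature tensor on ℝ⁴ that is Einstein, i.e., its Ricci tensor satisfies ρ_{ij} = (τ/4) δ_{ij} where τ is the scalar curvature. Then R is weakly Einstein: ∑_{a,b,c} R_{abci} R_{abcj} = (1/4)|R|² δ_{ij} for all i, j ∈ {1,2,3,4}. -/
import Mathlib


/-- Ricci tensor of an algebraic curvature tensor, `ρ i j = ∑ a, R a i j a`
(sign convention so that ρ is the usual Ricci contraction). -/
def Ric {n : ℕ} (R : Fin n → Fin n → Fin n → Fin n → ℝ) (i j : Fin n) : ℝ :=
  ∑ a, R a i j a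

/-- Scalar curvature `τ = ∑ i, ρ i i`. -/
def scalCurv {n : ℕ} (R : Fin n → Fin n → Fin n → Fin n → ℝ) : ℝ :=
  ∑ i, Ric R i i

/-- Squared norm of the curvature tensor, `|R|² = ∑ R_{ijkl}²`. -/
def normR2 {n : ℕ} (R : Fin n → Fin n → Fin n → Fin n → ℝ) : ℝ :=
  ∑ i, ∑ j, ∑ k, ∑ l, (R i j k l) ^ 2

/-- Squared norm of the Ricci tensor, `|ρ|² = ∑ ρ_{ij}²`. -/
def normRic2 {n : ℕ} (R : Fin n → Fin n → Fin n → Fin n → ℝ) : ℝ :=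
  ∑ i, ∑ j, (Ric R i j) ^ 2

/-- `R` is an algebraic curvature tensor: antisymmetry in the first and last pairs,
pair-interchange symmetry, and the first Bianchi identity. -/
def IsACT {n : ℕ} (R : Fin n → Fin n → Fin n → Fin n → ℝ) : Prop :=
  (∀ i j k l, R i j k l = - R j i k l) ∧
  (∀ i j k l, R i j k l = - R i j l k) ∧
  (∀ i j k l, R i j k l = R k l i j) ∧
  (∀ i j k l, R i j k l + R j k i l + R k i j l = 0)

/-- Kronecker delta. -/
def kron {n : ℕ} (i j : Fin n) : ℝ := if i = j then 1 else 0

set_option maxHeartbeats 1000000000 in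
theorem einstein_is_weakly_einstein (R : Fin 4 → Fin 4 → Fin 4 → Fin 4 → ℝ) (hR : IsACT R)
    (hE : ∀ i j, Ric R i j = scalCurv R / 4 * kron i j) :
    ∀ i j, (∑ a, ∑ b, ∑ c, R a b c i * R a b c j) = (1 / 4) * normR2 R * kron i j := by
  obtain ⟨h1, h2, h3, h4⟩ := hR
  have e0000 : R 0 0 0 0 = 0 := by linear_combination (1/2) * (h1 0 0 0 0)
  have e0001 : R 0 0 0 1 = 0 := by linear_combination (1/2) * (h1 0 0 0 1)
  have e0002 : R 0 0 0 2 = 0 := by linear_combination (1/2) * (h1 0 0 0 2)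
  have e0003 : R 0 0 0 3 = 0 := by linear_combination (1/2) * (h1 0 0 0 3)
  have e0010 : R 0 0 1 0 = 0 := by linear_combination (1/2) * (h1 0 0 1 0)
  have e0011 : R 0 0 1 1 = 0 := by linear_combination (1/2) * (h1 0 0 1 1)
  have e0012 : R 0 0 1 2 = 0 := by linear_combination (1/2) * (h1 0 0 1 2)
  have e0013 : R 0 0 1 3 = 0 := by linear_combination (1/2) * (h1 0 0 1 3)
  have e0020 : R 0 0 2 0 = 0 := by linear_combination (1/2) * (h1 0 0 2 0)
  have e0021 : R 0 0 2 1 = 0 := by linear_combination (1/2) * (h1 0 0 2 1)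
  have e0022 : R 0 0 2 2 = 0 := by linear_combination (1/2) * (h1 0 0 2 2)
  have e0023 : R 0 0 2 3 = 0 := by linear_combination (1/2) * (h1 0 0 2 3)
  have e0030 : R 0 0 3 0 = 0 := by linear_combination (1/2) * (h1 0 0 3 0)
  have e0031 : R 0 0 3 1 = 0 := by linear_combination (1/2) * (h1 0 0 3 1)
  have e0032 : R 0 0 3 2 = 0 := by linear_combination (1/2) * (h1 0 0 3 2)
  have e0033 : R 0 0 3 3 = 0 := by linear_combination (1/2) * (h1 0 0 3 3)
  have e0100 : R 0 1 0 0 = 0 := by linear_combination (1/2) * (h2 0 1 0 0)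
  have e0110 : R 0 1 1 0 = - R 0 1 0 1 := by linear_combination (h2 0 1 1 0)
  have e0111 : R 0 1 1 1 = 0 := by linear_combination (1/2) * (h2 0 1 1 1)
  have e0120 : R 0 1 2 0 = - R 0 1 0 2 := by linear_combination (h2 0 1 2 0)
  have e0121 : R 0 1 2 1 = - R 0 1 1 2 := by linear_combination (h2 0 1 2 1)
  have e0122 : R 0 1 2 2 = 0 := by linear_combination (1/2) * (h2 0 1 2 2)
  have e0130 : R 0 1 3 0 = - R 0 1 0 3 := by linear_combination (h2 0 1 3 0)
  have e0131 : R 0 1 3 1 = - R 0 1 1 3 := by linear_combination (h2 0 1 3 1)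
  have e0132 : R 0 1 3 2 = - R 0 1 2 3 := by linear_combination (h2 0 1 3 2)
  have e0133 : R 0 1 3 3 = 0 := by linear_combination (1/2) * (h2 0 1 3 3)
  have e0200 : R 0 2 0 0 = 0 := by linear_combination (1/2) * (h2 0 2 0 0)
  have e0201 : R 0 2 0 1 = R 0 1 0 2 := by linear_combination (h3 0 2 0 1)
  have e0210 : R 0 2 1 0 = - R 0 1 0 2 := by linear_combination (h2 0 2 1 0) + (-1) * (h3 0 2 0 1)
  have e0211 : R 0 2 1 1 = 0 := by linear_combination (1/2) * (h2 0 2 1 1)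
  have e0220 : R 0 2 2 0 = - R 0 2 0 2 := by linear_combination (h2 0 2 2 0)
  have e0221 : R 0 2 2 1 = - R 0 2 1 2 := by linear_combination (h2 0 2 2 1)
  have e0222 : R 0 2 2 2 = 0 := by linear_combination (1/2) * (h2 0 2 2 2)
  have e0230 : R 0 2 3 0 = - R 0 2 0 3 := by linear_combination (h2 0 2 3 0)
  have e0231 : R 0 2 3 1 = - R 0 2 1 3 := by linear_combination (h2 0 2 3 1)
  have e0232 : R 0 2 3 2 = - R 0 2 2 3 := by linear_combination (h2 0 2 3 2)
  have e0233 : R 0 2 3 3 = 0 := by linear_combination (1/2) * (h2 0 2 3 3)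
  have e0300 : R 0 3 0 0 = 0 := by linear_combination (1/2) * (h2 0 3 0 0)
  have e0301 : R 0 3 0 1 = R 0 1 0 3 := by linear_combination (h3 0 3 0 1)
  have e0302 : R 0 3 0 2 = R 0 2 0 3 := by linear_combination (h3 0 3 0 2)
  have e0310 : R 0 3 1 0 = - R 0 1 0 3 := by linear_combination (h2 0 3 1 0) + (-1) * (h3 0 3 0 1)
  have e0311 : R 0 3 1 1 = 0 := by linear_combination (1/2) * (h2 0 3 1 1)
  have e0320 : R 0 3 2 0 = - R 0 2 0 3 := by linear_combination (h2 0 3 2 0) + (-1) * (h3 0 3 0 2)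
  have e0321 : R 0 3 2 1 = - R 0 3 1 2 := by linear_combination (h2 0 3 2 1)
  have e0322 : R 0 3 2 2 = 0 := by linear_combination (1/2) * (h2 0 3 2 2)
  have e0330 : R 0 3 3 0 = - R 0 3 0 3 := by linear_combination (h2 0 3 3 0)
  have e0331 : R 0 3 3 1 = - R 0 3 1 3 := by linear_combination (h2 0 3 3 1)
  have e0332 : R 0 3 3 2 = - R 0 3 2 3 := by linear_combination (h2 0 3 3 2)
  have e0333 : R 0 3 3 3 = 0 := by linear_combination (1/2) * (h2 0 3 3 3)
  have e1000 : R 1 0 0 0 = 0 := by linear_combination (1/2) * (h2 1 0 0 0)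
  have e1001 : R 1 0 0 1 = - R 0 1 0 1 := by linear_combination (h1 1 0 0 1)
  have e1002 : R 1 0 0 2 = - R 0 1 0 2 := by linear_combination (h1 1 0 0 2)
  have e1003 : R 1 0 0 3 = - R 0 1 0 3 := by linear_combination (h1 1 0 0 3)
  have e1010 : R 1 0 1 0 = R 0 1 0 1 := by linear_combination (h1 1 0 1 0) + (-1) * (h2 0 1 1 0)
  have e1011 : R 1 0 1 1 = 0 := by linear_combination (1/2) * (h2 1 0 1 1)
  have e1012 : R 1 0 1 2 = - R 0 1 1 2 := by linear_combination (h1 1 0 1 2)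
  have e1013 : R 1 0 1 3 = - R 0 1 1 3 := by linear_combination (h1 1 0 1 3)
  have e1020 : R 1 0 2 0 = R 0 1 0 2 := by linear_combination (h1 1 0 2 0) + (-1) * (h2 0 1 2 0)
  have e1021 : R 1 0 2 1 = R 0 1 1 2 := by linear_combination (h1 1 0 2 1) + (-1) * (h2 0 1 2 1)
  have e1022 : R 1 0 2 2 = 0 := by linear_combination (1/2) * (h2 1 0 2 2)
  have e1023 : R 1 0 2 3 = - R 0 1 2 3 := by linear_combination (h1 1 0 2 3)
  have e1030 : R 1 0 3 0 = R 0 1 0 3 := by linear_combination (h1 1 0 3 0) + (-1) * (h2 0 1 3 0)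
  have e1031 : R 1 0 3 1 = R 0 1 1 3 := by linear_combination (h1 1 0 3 1) + (-1) * (h2 0 1 3 1)
  have e1032 : R 1 0 3 2 = R 0 1 2 3 := by linear_combination (h1 1 0 3 2) + (-1) * (h2 0 1 3 2)
  have e1033 : R 1 0 3 3 = 0 := by linear_combination (1/2) * (h2 1 0 3 3)
  have e1100 : R 1 1 0 0 = 0 := by linear_combination (1/2) * (h1 1 1 0 0)
  have e1101 : R 1 1 0 1 = 0 := by linear_combination (1/2) * (h1 1 1 0 1)
  have e1102 : R 1 1 0 2 = 0 := by linear_combination (1/2) * (h1 1 1 0 2)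
  have e1103 : R 1 1 0 3 = 0 := by linear_combination (1/2) * (h1 1 1 0 3)
  have e1110 : R 1 1 1 0 = 0 := by linear_combination (1/2) * (h1 1 1 1 0)
  have e1111 : R 1 1 1 1 = 0 := by linear_combination (1/2) * (h1 1 1 1 1)
  have e1112 : R 1 1 1 2 = 0 := by linear_combination (1/2) * (h1 1 1 1 2)
  have e1113 : R 1 1 1 3 = 0 := by linear_combination (1/2) * (h1 1 1 1 3)
  have e1120 : R 1 1 2 0 = 0 := by linear_combination (1/2) * (h1 1 1 2 0)
  have e1121 : R 1 1 2 1 = 0 := by linear_combination (1/2) * (h1 1 1 2 1)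
  have e1122 : R 1 1 2 2 = 0 := by linear_combination (1/2) * (h1 1 1 2 2)
  have e1123 : R 1 1 2 3 = 0 := by linear_combination (1/2) * (h1 1 1 2 3)
  have e1130 : R 1 1 3 0 = 0 := by linear_combination (1/2) * (h1 1 1 3 0)
  have e1131 : R 1 1 3 1 = 0 := by linear_combination (1/2) * (h1 1 1 3 1)
  have e1132 : R 1 1 3 2 = 0 := by linear_combination (1/2) * (h1 1 1 3 2)
  have e1133 : R 1 1 3 3 = 0 := by linear_combination (1/2) * (h1 1 1 3 3)
  have e1200 : R 1 2 0 0 = 0 := by linear_combination (1/2) * (h2 1 2 0 0)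
  have e1201 : R 1 2 0 1 = R 0 1 1 2 := by linear_combination (h3 1 2 0 1)
  have e1202 : R 1 2 0 2 = R 0 2 1 2 := by linear_combination (h3 1 2 0 2)
  have e1203 : R 1 2 0 3 = R 0 3 1 2 := by linear_combination (h3 1 2 0 3)
  have e1210 : R 1 2 1 0 = - R 0 1 1 2 := by linear_combination (h2 1 2 1 0) + (-1) * (h3 1 2 0 1)
  have e1211 : R 1 2 1 1 = 0 := by linear_combination (1/2) * (h2 1 2 1 1)
  have e1220 : R 1 2 2 0 = - R 0 2 1 2 := by linear_combination (h2 1 2 2 0) + (-1) * (h3 1 2 0 2)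
  have e1221 : R 1 2 2 1 = - R 1 2 1 2 := by linear_combination (h2 1 2 2 1)
  have e1222 : R 1 2 2 2 = 0 := by linear_combination (1/2) * (h2 1 2 2 2)
  have e1230 : R 1 2 3 0 = - R 0 3 1 2 := by linear_combination (h2 1 2 3 0) + (-1) * (h3 1 2 0 3)
  have e1231 : R 1 2 3 1 = - R 1 2 1 3 := by linear_combination (h2 1 2 3 1)
  have e1232 : R 1 2 3 2 = - R 1 2 2 3 := by linear_combination (h2 1 2 3 2)
  have e1233 : R 1 2 3 3 = 0 := by linear_combination (1/2) * (h2 1 2 3 3)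
  have e1300 : R 1 3 0 0 = 0 := by linear_combination (1/2) * (h2 1 3 0 0)
  have e1301 : R 1 3 0 1 = R 0 1 1 3 := by linear_combination (h3 1 3 0 1)
  have e1302 : R 1 3 0 2 = R 0 2 1 3 := by linear_combination (h3 1 3 0 2)
  have e1303 : R 1 3 0 3 = R 0 3 1 3 := by linear_combination (h3 1 3 0 3)
  have e1310 : R 1 3 1 0 = - R 0 1 1 3 := by linear_combination (h2 1 3 1 0) + (-1) * (h3 1 3 0 1)
  have e1311 : R 1 3 1 1 = 0 := by linear_combination (1/2) * (h2 1 3 1 1)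
  have e1312 : R 1 3 1 2 = R 1 2 1 3 := by linear_combination (h3 1 3 1 2)
  have e1320 : R 1 3 2 0 = - R 0 2 1 3 := by linear_combination (h2 1 3 2 0) + (-1) * (h3 1 3 0 2)
  have e1321 : R 1 3 2 1 = - R 1 2 1 3 := by linear_combination (h2 1 3 2 1) + (-1) * (h3 1 3 1 2)
  have e1322 : R 1 3 2 2 = 0 := by linear_combination (1/2) * (h2 1 3 2 2)
  have e1330 : R 1 3 3 0 = - R 0 3 1 3 := by linear_combination (h2 1 3 3 0) + (-1) * (h3 1 3 0 3)
  have e1331 : R 1 3 3 1 = - R 1 3 1 3 := by linear_combination (h2 1 3 3 1)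
  have e1332 : R 1 3 3 2 = - R 1 3 2 3 := by linear_combination (h2 1 3 3 2)
  have e1333 : R 1 3 3 3 = 0 := by linear_combination (1/2) * (h2 1 3 3 3)
  have e2000 : R 2 0 0 0 = 0 := by linear_combination (1/2) * (h2 2 0 0 0)
  have e2001 : R 2 0 0 1 = - R 0 1 0 2 := by linear_combination (h1 2 0 0 1) + (-1) * (h3 0 2 0 1)
  have e2002 : R 2 0 0 2 = - R 0 2 0 2 := by linear_combination (h1 2 0 0 2)
  have e2003 : R 2 0 0 3 = - R 0 2 0 3 := by linear_combination (h1 2 0 0 3)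
  have e2010 : R 2 0 1 0 = R 0 1 0 2 := by linear_combination (h1 2 0 1 0) + (-1) * (h2 0 2 1 0) + (h3 0 2 0 1)
  have e2011 : R 2 0 1 1 = 0 := by linear_combination (1/2) * (h2 2 0 1 1)
  have e2012 : R 2 0 1 2 = - R 0 2 1 2 := by linear_combination (h1 2 0 1 2)
  have e2013 : R 2 0 1 3 = - R 0 2 1 3 := by linear_combination (h1 2 0 1 3)
  have e2020 : R 2 0 2 0 = R 0 2 0 2 := by linear_combination (h1 2 0 2 0) + (-1) * (h2 0 2 2 0)
  have e2021 : R 2 0 2 1 = R 0 2 1 2 := by linear_combination (h1 2 0 2 1) + (-1) * (h2 0 2 2 1)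
  have e2022 : R 2 0 2 2 = 0 := by linear_combination (1/2) * (h2 2 0 2 2)
  have e2023 : R 2 0 2 3 = - R 0 2 2 3 := by linear_combination (h1 2 0 2 3)
  have e2030 : R 2 0 3 0 = R 0 2 0 3 := by linear_combination (h1 2 0 3 0) + (-1) * (h2 0 2 3 0)
  have e2031 : R 2 0 3 1 = R 0 2 1 3 := by linear_combination (h1 2 0 3 1) + (-1) * (h2 0 2 3 1)
  have e2032 : R 2 0 3 2 = R 0 2 2 3 := by linear_combination (h1 2 0 3 2) + (-1) * (h2 0 2 3 2)
  have e2033 : R 2 0 3 3 = 0 := by linear_combination (1/2) * (h2 2 0 3 3)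
  have e2100 : R 2 1 0 0 = 0 := by linear_combination (1/2) * (h2 2 1 0 0)
  have e2101 : R 2 1 0 1 = - R 0 1 1 2 := by linear_combination (h1 2 1 0 1) + (-1) * (h3 1 2 0 1)
  have e2102 : R 2 1 0 2 = - R 0 2 1 2 := by linear_combination (h1 2 1 0 2) + (-1) * (h3 1 2 0 2)
  have e2103 : R 2 1 0 3 = - R 0 3 1 2 := by linear_combination (h1 2 1 0 3) + (-1) * (h3 1 2 0 3)
  have e2110 : R 2 1 1 0 = R 0 1 1 2 := by linear_combination (h1 2 1 1 0) + (-1) * (h2 1 2 1 0) + (h3 1 2 0 1)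
  have e2111 : R 2 1 1 1 = 0 := by linear_combination (1/2) * (h2 2 1 1 1)
  have e2112 : R 2 1 1 2 = - R 1 2 1 2 := by linear_combination (h1 2 1 1 2)
  have e2113 : R 2 1 1 3 = - R 1 2 1 3 := by linear_combination (h1 2 1 1 3)
  have e2120 : R 2 1 2 0 = R 0 2 1 2 := by linear_combination (h1 2 1 2 0) + (-1) * (h2 1 2 2 0) + (h3 1 2 0 2)
  have e2121 : R 2 1 2 1 = R 1 2 1 2 := by linear_combination (h1 2 1 2 1) + (-1) * (h2 1 2 2 1)
  have e2122 : R 2 1 2 2 = 0 := by linear_combination (1/2) * (h2 2 1 2 2)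
  have e2123 : R 2 1 2 3 = - R 1 2 2 3 := by linear_combination (h1 2 1 2 3)
  have e2130 : R 2 1 3 0 = R 0 3 1 2 := by linear_combination (h1 2 1 3 0) + (-1) * (h2 1 2 3 0) + (h3 1 2 0 3)
  have e2131 : R 2 1 3 1 = R 1 2 1 3 := by linear_combination (h1 2 1 3 1) + (-1) * (h2 1 2 3 1)
  have e2132 : R 2 1 3 2 = R 1 2 2 3 := by linear_combination (h1 2 1 3 2) + (-1) * (h2 1 2 3 2)
  have e2133 : R 2 1 3 3 = 0 := by linear_combination (1/2) * (h2 2 1 3 3)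
  have e2200 : R 2 2 0 0 = 0 := by linear_combination (1/2) * (h1 2 2 0 0)
  have e2201 : R 2 2 0 1 = 0 := by linear_combination (1/2) * (h1 2 2 0 1)
  have e2202 : R 2 2 0 2 = 0 := by linear_combination (1/2) * (h1 2 2 0 2)
  have e2203 : R 2 2 0 3 = 0 := by linear_combination (1/2) * (h1 2 2 0 3)
  have e2210 : R 2 2 1 0 = 0 := by linear_combination (1/2) * (h1 2 2 1 0)
  have e2211 : R 2 2 1 1 = 0 := by linear_combination (1/2) * (h1 2 2 1 1)
  have e2212 : R 2 2 1 2 = 0 := by linear_combination (1/2) * (h1 2 2 1 2)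
  have e2213 : R 2 2 1 3 = 0 := by linear_combination (1/2) * (h1 2 2 1 3)
  have e2220 : R 2 2 2 0 = 0 := by linear_combination (1/2) * (h1 2 2 2 0)
  have e2221 : R 2 2 2 1 = 0 := by linear_combination (1/2) * (h1 2 2 2 1)
  have e2222 : R 2 2 2 2 = 0 := by linear_combination (1/2) * (h1 2 2 2 2)
  have e2223 : R 2 2 2 3 = 0 := by linear_combination (1/2) * (h1 2 2 2 3)
  have e2230 : R 2 2 3 0 = 0 := by linear_combination (1/2) * (h1 2 2 3 0)
  have e2231 : R 2 2 3 1 = 0 := by linear_combination (1/2) * (h1 2 2 3 1)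
  have e2232 : R 2 2 3 2 = 0 := by linear_combination (1/2) * (h1 2 2 3 2)
  have e2233 : R 2 2 3 3 = 0 := by linear_combination (1/2) * (h1 2 2 3 3)
  have e2300 : R 2 3 0 0 = 0 := by linear_combination (1/2) * (h2 2 3 0 0)
  have e2301 : R 2 3 0 1 = R 0 1 2 3 := by linear_combination (h3 2 3 0 1)
  have e2302 : R 2 3 0 2 = R 0 2 2 3 := by linear_combination (h3 2 3 0 2)
  have e2303 : R 2 3 0 3 = R 0 3 2 3 := by linear_combination (h3 2 3 0 3)
  have e2310 : R 2 3 1 0 = - R 0 1 2 3 := by linear_combination (h2 2 3 1 0) + (-1) * (h3 2 3 0 1)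
  have e2311 : R 2 3 1 1 = 0 := by linear_combination (1/2) * (h2 2 3 1 1)
  have e2312 : R 2 3 1 2 = R 1 2 2 3 := by linear_combination (h3 2 3 1 2)
  have e2313 : R 2 3 1 3 = R 1 3 2 3 := by linear_combination (h3 2 3 1 3)
  have e2320 : R 2 3 2 0 = - R 0 2 2 3 := by linear_combination (h2 2 3 2 0) + (-1) * (h3 2 3 0 2)
  have e2321 : R 2 3 2 1 = - R 1 2 2 3 := by linear_combination (h2 2 3 2 1) + (-1) * (h3 2 3 1 2)
  have e2322 : R 2 3 2 2 = 0 := by linear_combination (1/2) * (h2 2 3 2 2)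
  have e2330 : R 2 3 3 0 = - R 0 3 2 3 := by linear_combination (h2 2 3 3 0) + (-1) * (h3 2 3 0 3)
  have e2331 : R 2 3 3 1 = - R 1 3 2 3 := by linear_combination (h2 2 3 3 1) + (-1) * (h3 2 3 1 3)
  have e2332 : R 2 3 3 2 = - R 2 3 2 3 := by linear_combination (h2 2 3 3 2)
  have e2333 : R 2 3 3 3 = 0 := by linear_combination (1/2) * (h2 2 3 3 3)
  have e3000 : R 3 0 0 0 = 0 := by linear_combination (1/2) * (h2 3 0 0 0)
  have e3001 : R 3 0 0 1 = - R 0 1 0 3 := by linear_combination (h1 3 0 0 1) + (-1) * (h3 0 3 0 1)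
  have e3002 : R 3 0 0 2 = - R 0 2 0 3 := by linear_combination (h1 3 0 0 2) + (-1) * (h3 0 3 0 2)
  have e3003 : R 3 0 0 3 = - R 0 3 0 3 := by linear_combination (h1 3 0 0 3)
  have e3010 : R 3 0 1 0 = R 0 1 0 3 := by linear_combination (h1 3 0 1 0) + (-1) * (h2 0 3 1 0) + (h3 0 3 0 1)
  have e3011 : R 3 0 1 1 = 0 := by linear_combination (1/2) * (h2 3 0 1 1)
  have e3012 : R 3 0 1 2 = - R 0 3 1 2 := by linear_combination (h1 3 0 1 2)
  have e3013 : R 3 0 1 3 = - R 0 3 1 3 := by linear_combination (h1 3 0 1 3)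
  have e3020 : R 3 0 2 0 = R 0 2 0 3 := by linear_combination (h1 3 0 2 0) + (-1) * (h2 0 3 2 0) + (h3 0 3 0 2)
  have e3021 : R 3 0 2 1 = R 0 3 1 2 := by linear_combination (h1 3 0 2 1) + (-1) * (h2 0 3 2 1)
  have e3022 : R 3 0 2 2 = 0 := by linear_combination (1/2) * (h2 3 0 2 2)
  have e3023 : R 3 0 2 3 = - R 0 3 2 3 := by linear_combination (h1 3 0 2 3)
  have e3030 : R 3 0 3 0 = R 0 3 0 3 := by linear_combination (h1 3 0 3 0) + (-1) * (h2 0 3 3 0)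
  have e3031 : R 3 0 3 1 = R 0 3 1 3 := by linear_combination (h1 3 0 3 1) + (-1) * (h2 0 3 3 1)
  have e3032 : R 3 0 3 2 = R 0 3 2 3 := by linear_combination (h1 3 0 3 2) + (-1) * (h2 0 3 3 2)
  have e3033 : R 3 0 3 3 = 0 := by linear_combination (1/2) * (h2 3 0 3 3)
  have e3100 : R 3 1 0 0 = 0 := by linear_combination (1/2) * (h2 3 1 0 0)
  have e3101 : R 3 1 0 1 = - R 0 1 1 3 := by linear_combination (h1 3 1 0 1) + (-1) * (h3 1 3 0 1)
  have e3102 : R 3 1 0 2 = - R 0 2 1 3 := by linear_combination (h1 3 1 0 2) + (-1) * (h3 1 3 0 2)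
  have e3103 : R 3 1 0 3 = - R 0 3 1 3 := by linear_combination (h1 3 1 0 3) + (-1) * (h3 1 3 0 3)
  have e3110 : R 3 1 1 0 = R 0 1 1 3 := by linear_combination (h1 3 1 1 0) + (-1) * (h2 1 3 1 0) + (h3 1 3 0 1)
  have e3111 : R 3 1 1 1 = 0 := by linear_combination (1/2) * (h2 3 1 1 1)
  have e3112 : R 3 1 1 2 = - R 1 2 1 3 := by linear_combination (h1 3 1 1 2) + (-1) * (h3 1 3 1 2)
  have e3113 : R 3 1 1 3 = - R 1 3 1 3 := by linear_combination (h1 3 1 1 3)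
  have e3120 : R 3 1 2 0 = R 0 2 1 3 := by linear_combination (h1 3 1 2 0) + (-1) * (h2 1 3 2 0) + (h3 1 3 0 2)
  have e3121 : R 3 1 2 1 = R 1 2 1 3 := by linear_combination (h1 3 1 2 1) + (-1) * (h2 1 3 2 1) + (h3 1 3 1 2)
  have e3122 : R 3 1 2 2 = 0 := by linear_combination (1/2) * (h2 3 1 2 2)
  have e3123 : R 3 1 2 3 = - R 1 3 2 3 := by linear_combination (h1 3 1 2 3)
  have e3130 : R 3 1 3 0 = R 0 3 1 3 := by linear_combination (h1 3 1 3 0) + (-1) * (h2 1 3 3 0) + (h3 1 3 0 3)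
  have e3131 : R 3 1 3 1 = R 1 3 1 3 := by linear_combination (h1 3 1 3 1) + (-1) * (h2 1 3 3 1)
  have e3132 : R 3 1 3 2 = R 1 3 2 3 := by linear_combination (h1 3 1 3 2) + (-1) * (h2 1 3 3 2)
  have e3133 : R 3 1 3 3 = 0 := by linear_combination (1/2) * (h2 3 1 3 3)
  have e3200 : R 3 2 0 0 = 0 := by linear_combination (1/2) * (h2 3 2 0 0)
  have e3201 : R 3 2 0 1 = - R 0 1 2 3 := by linear_combination (h1 3 2 0 1) + (-1) * (h3 2 3 0 1)
  have e3202 : R 3 2 0 2 = - R 0 2 2 3 := by linear_combination (h1 3 2 0 2) + (-1) * (h3 2 3 0 2)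
  have e3203 : R 3 2 0 3 = - R 0 3 2 3 := by linear_combination (h1 3 2 0 3) + (-1) * (h3 2 3 0 3)
  have e3210 : R 3 2 1 0 = R 0 1 2 3 := by linear_combination (h1 3 2 1 0) + (-1) * (h2 2 3 1 0) + (h3 2 3 0 1)
  have e3211 : R 3 2 1 1 = 0 := by linear_combination (1/2) * (h2 3 2 1 1)
  have e3212 : R 3 2 1 2 = - R 1 2 2 3 := by linear_combination (h1 3 2 1 2) + (-1) * (h3 2 3 1 2)
  have e3213 : R 3 2 1 3 = - R 1 3 2 3 := by linear_combination (h1 3 2 1 3) + (-1) * (h3 2 3 1 3)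
  have e3220 : R 3 2 2 0 = R 0 2 2 3 := by linear_combination (h1 3 2 2 0) + (-1) * (h2 2 3 2 0) + (h3 2 3 0 2)
  have e3221 : R 3 2 2 1 = R 1 2 2 3 := by linear_combination (h1 3 2 2 1) + (-1) * (h2 2 3 2 1) + (h3 2 3 1 2)
  have e3222 : R 3 2 2 2 = 0 := by linear_combination (1/2) * (h2 3 2 2 2)
  have e3223 : R 3 2 2 3 = - R 2 3 2 3 := by linear_combination (h1 3 2 2 3)
  have e3230 : R 3 2 3 0 = R 0 3 2 3 := by linear_combination (h1 3 2 3 0) + (-1) * (h2 2 3 3 0) + (h3 2 3 0 3)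
  have e3231 : R 3 2 3 1 = R 1 3 2 3 := by linear_combination (h1 3 2 3 1) + (-1) * (h2 2 3 3 1) + (h3 2 3 1 3)
  have e3232 : R 3 2 3 2 = R 2 3 2 3 := by linear_combination (h1 3 2 3 2) + (-1) * (h2 2 3 3 2)
  have e3233 : R 3 2 3 3 = 0 := by linear_combination (1/2) * (h2 3 2 3 3)
  have e3300 : R 3 3 0 0 = 0 := by linear_combination (1/2) * (h1 3 3 0 0)
  have e3301 : R 3 3 0 1 = 0 := by linear_combination (1/2) * (h1 3 3 0 1)
  have e3302 : R 3 3 0 2 = 0 := by linear_combination (1/2) * (h1 3 3 0 2)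
  have e3303 : R 3 3 0 3 = 0 := by linear_combination (1/2) * (h1 3 3 0 3)
  have e3310 : R 3 3 1 0 = 0 := by linear_combination (1/2) * (h1 3 3 1 0)
  have e3311 : R 3 3 1 1 = 0 := by linear_combination (1/2) * (h1 3 3 1 1)
  have e3312 : R 3 3 1 2 = 0 := by linear_combination (1/2) * (h1 3 3 1 2)
  have e3313 : R 3 3 1 3 = 0 := by linear_combination (1/2) * (h1 3 3 1 3)
  have e3320 : R 3 3 2 0 = 0 := by linear_combination (1/2) * (h1 3 3 2 0)
  have e3321 : R 3 3 2 1 = 0 := by linear_combination (1/2) * (h1 3 3 2 1)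
  have e3322 : R 3 3 2 2 = 0 := by linear_combination (1/2) * (h1 3 3 2 2)
  have e3323 : R 3 3 2 3 = 0 := by linear_combination (1/2) * (h1 3 3 2 3)
  have e3330 : R 3 3 3 0 = 0 := by linear_combination (1/2) * (h1 3 3 3 0)
  have e3331 : R 3 3 3 1 = 0 := by linear_combination (1/2) * (h1 3 3 3 1)
  have e3332 : R 3 3 3 2 = 0 := by linear_combination (1/2) * (h1 3 3 3 2)
  have e3333 : R 3 3 3 3 = 0 := by linear_combination (1/2) * (h1 3 3 3 3)
  have cB : R 0 1 2 3 - R 0 2 1 3 + R 0 3 1 2 = 0 := by linear_combination (h4 0 1 2 3) - (e1203) - (e2013)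
  have cE00 : (-1/2) * R 0 1 0 1 + (-1/2) * R 0 2 0 2 + (-1/2) * R 0 3 0 3 + (1/2) * R 1 2 1 2 + (1/2) * R 1 3 1 3 + (1/2) * R 2 3 2 3 = 0 := by
    have h := hE 0 0
    rw [show kron (0:Fin 4) 0 = 1 from rfl] at h
    simp only [Ric, scalCurv, Fin.sum_univ_four] at h
    linear_combination h + (-3/4) * e0000 + (1/4) * e0110 + (1/4) * e0220 + (1/4) * e0330 + (-3/4) * e1001 + (1/4) * e1111 + (1/4) * e1221 + (1/4) * e1331 + (-3/4) * e2002 + (1/4) * e2112 + (1/4) * e2222 + (1/4) * e2332 + (-3/4) * e3003 + (1/4) * e3113 + (1/4) * e3223 + (1/4) * e3333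
  have cE01 : - R 0 2 1 2 - R 0 3 1 3 = 0 := by
    have h := hE 0 1
    rw [show kron (0:Fin 4) 1 = 0 from rfl] at h
    simp only [Ric, scalCurv, Fin.sum_univ_four] at h
    linear_combination h + (-1) * e0010 + (-1) * e1011 + (-1) * e2012 + (-1) * e3013
  have cE02 : R 0 1 1 2 - R 0 3 2 3 = 0 := by
    have h := hE 0 2
    rw [show kron (0:Fin 4) 2 = 0 from rfl] at h
    simp only [Ric, scalCurv, Fin.sum_univ_four] at h
    linear_combination h + (-1) * e0020 + (-1) * e1021 + (-1) * e2022 + (-1) * e3023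
  have cE03 : R 0 1 1 3 + R 0 2 2 3 = 0 := by
    have h := hE 0 3
    rw [show kron (0:Fin 4) 3 = 0 from rfl] at h
    simp only [Ric, scalCurv, Fin.sum_univ_four] at h
    linear_combination h + (-1) * e0030 + (-1) * e1031 + (-1) * e2032 + (-1) * e3033
  have cE11 : (-1/2) * R 0 1 0 1 + (1/2) * R 0 2 0 2 + (1/2) * R 0 3 0 3 + (-1/2) * R 1 2 1 2 + (-1/2) * R 1 3 1 3 + (1/2) * R 2 3 2 3 = 0 := by
    have h := hE 1 1
    rw [show kron (1:Fin 4) 1 = 1 from rfl] at h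
    simp only [Ric, scalCurv, Fin.sum_univ_four] at h
    linear_combination h + (1/4) * e0000 + (-3/4) * e0110 + (1/4) * e0220 + (1/4) * e0330 + (1/4) * e1001 + (-3/4) * e1111 + (1/4) * e1221 + (1/4) * e1331 + (1/4) * e2002 + (-3/4) * e2112 + (1/4) * e2222 + (1/4) * e2332 + (1/4) * e3003 + (-3/4) * e3113 + (1/4) * e3223 + (1/4) * e3333
  have cE12 : - R 0 1 0 2 - R 1 3 2 3 = 0 := by
    have h := hE 1 2
    rw [show kron (1:Fin 4) 2 = 0 from rfl] at h
    simp only [Ric, scalCurv, Fin.sum_univ_four] at h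
    linear_combination h + (-1) * e0120 + (-1) * e1121 + (-1) * e2122 + (-1) * e3123
  have cE13 : - R 0 1 0 3 + R 1 2 2 3 = 0 := by
    have h := hE 1 3
    rw [show kron (1:Fin 4) 3 = 0 from rfl] at h
    simp only [Ric, scalCurv, Fin.sum_univ_four] at h
    linear_combination h + (-1) * e0130 + (-1) * e1131 + (-1) * e2132 + (-1) * e3133
  have cE22 : (1/2) * R 0 1 0 1 + (-1/2) * R 0 2 0 2 + (1/2) * R 0 3 0 3 + (-1/2) * R 1 2 1 2 + (1/2) * R 1 3 1 3 + (-1/2) * R 2 3 2 3 = 0 := by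
    have h := hE 2 2
    rw [show kron (2:Fin 4) 2 = 1 from rfl] at h
    simp only [Ric, scalCurv, Fin.sum_univ_four] at h
    linear_combination h + (1/4) * e0000 + (1/4) * e0110 + (-3/4) * e0220 + (1/4) * e0330 + (1/4) * e1001 + (1/4) * e1111 + (-3/4) * e1221 + (1/4) * e1331 + (1/4) * e2002 + (1/4) * e2112 + (-3/4) * e2222 + (1/4) * e2332 + (1/4) * e3003 + (1/4) * e3113 + (-3/4) * e3223 + (1/4) * e3333
  have cE23 : - R 0 2 0 3 - R 1 2 1 3 = 0 := by
    have h := hE 2 3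
    rw [show kron (2:Fin 4) 3 = 0 from rfl] at h
    simp only [Ric, scalCurv, Fin.sum_univ_four] at h
    linear_combination h + (-1) * e0230 + (-1) * e1231 + (-1) * e2232 + (-1) * e3233
  have cE33 : (1/2) * R 0 1 0 1 + (1/2) * R 0 2 0 2 + (-1/2) * R 0 3 0 3 + (1/2) * R 1 2 1 2 + (-1/2) * R 1 3 1 3 + (-1/2) * R 2 3 2 3 = 0 := by
    have h := hE 3 3
    rw [show kron (3:Fin 4) 3 = 1 from rfl] at h
    simp only [Ric, scalCurv, Fin.sum_univ_four] at h
    linear_combination h + (1/4) * e0000 + (1/4) * e0110 + (1/4) * e0220 + (-3/4) * e0330 + (1/4) * e1001 + (1/4) * e1111 + (1/4) * e1221 + (-3/4) * e1331 + (1/4) * e2002 + (1/4) * e2112 + (1/4) * e2222 + (-3/4) * e2332 + (1/4) * e3003 + (1/4) * e3113 + (1/4) * e3223 + (-3/4) * e3333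
  have hnorm : normR2 R = 4 * R 0 1 0 1 ^ 2 + 8 * R 0 1 0 2 ^ 2 + 8 * R 0 1 0 3 ^ 2 + 8 * R 0 1 1 2 ^ 2 + 8 * R 0 1 1 3 ^ 2 + 8 * R 0 1 2 3 ^ 2 + 4 * R 0 2 0 2 ^ 2 + 8 * R 0 2 0 3 ^ 2 + 8 * R 0 2 1 2 ^ 2 + 8 * R 0 2 1 3 ^ 2 + 8 * R 0 2 2 3 ^ 2 + 4 * R 0 3 0 3 ^ 2 + 8 * R 0 3 1 2 ^ 2 + 8 * R 0 3 1 3 ^ 2 + 8 * R 0 3 2 3 ^ 2 + 4 * R 1 2 1 2 ^ 2 + 8 * R 1 2 1 3 ^ 2 + 8 * R 1 2 2 3 ^ 2 + 4 * R 1 3 1 3 ^ 2 + 8 * R 1 3 2 3 ^ 2 + 4 * R 2 3 2 3 ^ 2 := by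
    simp only [normR2, Fin.sum_univ_four, e0000, e0001, e0002, e0003, e0010, e0011, e0012, e0013, e0020, e0021, e0022, e0023, e0030, e0031, e0032, e0033, e0100, e0110, e0111, e0120, e0121, e0122, e0130, e0131, e0132, e0133, e0200, e0201, e0210, e0211, e0220, e0221, e0222, e0230, e0231, e0232, e0233, e0300, e0301, e0302, e0310, e0311, e0320, e0321, e0322, e0330, e0331, e0332, e0333, e1000, e1001, e1002, e1003, e1010, e1011, e1012, e1013, e1020, e1021, e1022, e1023, e1030, e1031, e1032, e1033, e1100, e1101, e1102, e1103, e1110, e1111, e1112, e1113, e1120, e1121, e1122, e1123, e1130, e1131, e1132, e1133, e1200, e1201, e1202, e1203, e1210, e1211, e1220, e1221, e1222, e1230, e1231, e1232, e1233, e1300, e1301, e1302, e1303, e1310, e1311, e1312, e1320, e1321, e1322, e1330, e1331, e1332, e1333, e2000, e2001, e2002, e2003, e2010, e2011, e2012, e2013, e2020, e2021, e2022, e2023, e2030, e2031, e2032, e2033, e2100, e2101, e2102, e2103, e2110, e2111, e2112, e2113, e2120, e2121, e2122, e2123, e2130, e2131, e2132, e2133, e2200, e2201, e2202, e2203, e2210,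 e2211, e2212, e2213, e2220, e2221, e2222, e2223, e2230, e2231, e2232, e2233, e2300, e2301, e2302, e2303, e2310, e2311, e2312, e2313, e2320, e2321, e2322, e2330, e2331, e2332, e2333, e3000, e3001, e3002, e3003, e3010, e3011, e3012, e3013, e3020, e3021, e3022, e3023, e3030, e3031, e3032, e3033, e3100, e3101, e3102, e3103, e3110, e3111, e3112, e3113, e3120, e3121, e3122, e3123, e3130, e3131, e3132, e3133, e3200, e3201, e3202, e3203, e3210, e3211, e3212, e3213, e3220, e3221, e3222, e3223, e3230, e3231, e3232, e3233, e3300, e3301, e3302, e3303, e3310, e3311, e3312, e3313, e3320, e3321, e3322, e3323, e3330, e3331, e3332, e3333]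
    ring
  intro i j
  fin_cases i <;> fin_cases j
  · show (∑ a, ∑ b, ∑ c, R a b c 0 * R a b c 0) = 1 / 4 * normR2 R * kron 0 0
    rw [hnorm, show kron (0:Fin 4) 0 = 1 from rfl]
    simp only [Fin.sum_univ_four, e0000, e0010, e0020, e0030, e0100, e0110, e0120, e0130, e0200, e0210, e0220, e0230, e0300, e0310, e0320, e0330, e1000, e1010, e1020, e1030, e1100, e1110, e1120, e1130, e1200, e1210, e1220, e1230, e1300, e1310, e1320, e1330, e2000, e2010, e2020, e2030, e2100, e2110, e2120, e2130, e2200, e2210, e2220, e2230, e2300, e2310, e2320, e2330, e3000, e3010, e3020, e3030, e3100, e3110, e3120, e3130, e3200, e3210, e3220, e3230, e3300, e3310, e3320, e3330]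
    linear_combination ((-2) * R 0 2 0 2 + (-2) * R 0 3 0 3 + (2) * R 1 2 1 2 + (-2) * R 2 3 2 3) * cE00 + ((-2) * R 0 1 0 1 + (-2) * R 0 2 0 2 + (2) * R 1 2 1 2 + (2) * R 1 3 1 3) * cE11 + ((-2) * R 0 1 0 2 + (2) * R 1 3 2 3) * cE12 + ((-2) * R 0 1 0 3 + (-2) * R 1 2 2 3) * cE13 + ((-2) * R 0 2 0 2 + (2) * R 1 2 1 2) * cE22 + ((-2) * R 0 2 0 3 + (2) * R 1 2 1 3) * cE23
  · show (∑ a, ∑ b, ∑ c, R a b c 0 * R a b c 1) = 1 / 4 * normR2 R * kron 0 1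
    rw [hnorm, show kron (0:Fin 4) 1 = 0 from rfl]
    simp only [Fin.sum_univ_four, e0000, e0001, e0010, e0011, e0020, e0021, e0030, e0031, e0100, e0110, e0111, e0120, e0121, e0130, e0131, e0200, e0201, e0210, e0211, e0220, e0221, e0230, e0231, e0300, e0301, e0310, e0311, e0320, e0321, e0330, e0331, e1000, e1001, e1010, e1011, e1020, e1021, e1030, e1031, e1100, e1101, e1110, e1111, e1120, e1121, e1130, e1131, e1200, e1201, e1210, e1211, e1220, e1221, e1230, e1231, e1300, e1301, e1310, e1311, e1320, e1321, e1330, e1331, e2000, e2001, e2010, e2011, e2020, e2021, e2030, e2031, e2100, e2101, e2110, e2111, e2120, e2121, e2130, e2131, e2200, e2201, e2210, e2211, e2220, e2221, e2230, e2231, e2300, e2301, e2310, e2311, e2320, e2321, e2330, e2331, e3000, e3001, e3010, e3011, e3020, e3021, e3030, e3031, e3100, e3101, e3110, e3111, e3120, e3121, e3130, e3131, e3200, e3201, e3210, e3211, e3220, e3221, e3230, e3231, e3300, e3301, e3310, e3311, e3320, e3321, e3330, e3331]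
    linear_combination ((2) * R 0 2 0 3 + (2) * R 1 2 1 3) * cB + ((-2) * R 0 2 1 2) * cE00 + ((-2) * R 0 3 0 3 + (-2) * R 1 3 1 3) * cE01 + ((-2) * R 1 3 2 3) * cE02 + ((2) * R 1 2 2 3) * cE03 + ((-2) * R 0 2 1 2) * cE11 + ((-2) * R 0 1 1 2) * cE12 + ((-2) * R 0 1 1 3) * cE13 + ((-4) * R 0 2 1 2) * cE22 + ((2) * R 0 1 2 3 + (-4) * R 0 2 1 3) * cE23
  · show (∑ a, ∑ b, ∑ c, R a b c 0 * R a b c 2) = 1 / 4 * normR2 R * kron 0 2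
    rw [hnorm, show kron (0:Fin 4) 2 = 0 from rfl]
    simp only [Fin.sum_univ_four, e0000, e0002, e0010, e0012, e0020, e0022, e0030, e0032, e0100, e0110, e0120, e0122, e0130, e0132, e0200, e0210, e0220, e0222, e0230, e0232, e0300, e0302, e0310, e0320, e0322, e0330, e0332, e1000, e1002, e1010, e1012, e1020, e1022, e1030, e1032, e1100, e1102, e1110, e1112, e1120, e1122, e1130, e1132, e1200, e1202, e1210, e1220, e1222, e1230, e1232, e1300, e1302, e1310, e1312, e1320, e1322, e1330, e1332, e2000, e2002, e2010, e2012, e2020, e2022, e2030, e2032, e2100, e2102, e2110, e2112, e2120, e2122, e2130, e2132, e2200, e2202, e2210, e2212, e2220, e2222, e2230, e2232, e2300, e2302, e2310, e2312, e2320, e2322, e2330, e2332, e3000, e3002, e3010, e3012, e3020, e3022, e3030, e3032, e3100, e3102, e3110, e3112, e3120, e3122, e3130, e3132, e3200, e3202, e3210, e3212, e3220, e3222, e3230, e3232, e3300, e3302, e3310, e3312, e3320, e3322, e3330, e3332]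
    linear_combination ((-2) * R 0 1 0 3 + (2) * R 1 2 2 3) * cB + ((-2) * R 0 1 1 2 + (4) * R 0 3 2 3) * cE00 + ((-2) * R 1 3 2 3) * cE01 + ((-2) * R 0 1 0 1 + (-2) * R 0 2 0 2 + (-4) * R 0 3 0 3 + (2) * R 1 2 1 2 + (2) * R 1 3 1 3) * cE02 + ((2) * R 0 2 0 3) * cE03 + ((4) * R 0 1 1 2) * cE11 + ((2) * R 0 2 1 2) * cE12 + ((-4) * R 0 1 2 3 + (2) * R 0 2 1 3) * cE13 + ((2) * R 0 1 1 2) * cE22 + ((2) * R 0 1 1 3) * cE23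
  · show (∑ a, ∑ b, ∑ c, R a b c 0 * R a b c 3) = 1 / 4 * normR2 R * kron 0 3
    rw [hnorm, show kron (0:Fin 4) 3 = 0 from rfl]
    simp only [Fin.sum_univ_four, e0000, e0003, e0010, e0013, e0020, e0023, e0030, e0033, e0100, e0110, e0120, e0130, e0133, e0200, e0210, e0220, e0230, e0233, e0300, e0310, e0320, e0330, e0333, e1000, e1003, e1010, e1013, e1020, e1023, e1030, e1033, e1100, e1103, e1110, e1113, e1120, e1123, e1130, e1133, e1200, e1203, e1210, e1220, e1230, e1233, e1300, e1303, e1310, e1320, e1330, e1333, e2000, e2003, e2010, e2013, e2020, e2023, e2030, e2033, e2100, e2103, e2110, e2113, e2120, e2123, e2130, e2133, e2200, e2203, e2210, e2213, e2220, e2223, e2230, e2233, e2300, e2303, e2310, e2313, e2320, e2330, e2333, e3000, e3003, e3010, e3013, e3020, e3023, e3030, e3033, e3100, e3103, e3110, e3113, e3120, e3123, e3130, e3133, e3200, e3203, e3210, e3213, e3220, e3223, e3230, e3233, e3300, e3303, e3310, e3313, e3320, e3323, e3330, e3333]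
    linear_combination ((-4) * R 0 1 1 3 + (-4) * R 0 2 2 3) * cE00 + ((2) * R 0 1 0 3) * cE01 + ((2) * R 0 2 0 3) * cE02 + ((-2) * R 0 1 0 1 + (-4) * R 0 2 0 2 + (-2) * R 0 3 0 3 + (2) * R 1 2 1 2 + (2) * R 1 3 1 3) * cE03 + ((2) * R 0 1 1 3) * cE11 + ((2) * R 0 1 2 3 + (2) * R 0 2 1 3) * cE12 + ((-2) * R 0 2 1 2) * cE13 + ((-2) * R 0 1 1 3) * cE22 + ((2) * R 0 1 1 2) * cE23
  · show (∑ a, ∑ b, ∑ c, R a b c 1 * R a b c 0) = 1 / 4 * normR2 R * kron 1 0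
    rw [hnorm, show kron (1:Fin 4) 0 = 0 from rfl]
    simp only [Fin.sum_univ_four, e0000, e0001, e0010, e0011, e0020, e0021, e0030, e0031, e0100, e0110, e0111, e0120, e0121, e0130, e0131, e0200, e0201, e0210, e0211, e0220, e0221, e0230, e0231, e0300, e0301, e0310, e0311, e0320, e0321, e0330, e0331, e1000, e1001, e1010, e1011, e1020, e1021, e1030, e1031, e1100, e1101, e1110, e1111, e1120, e1121, e1130, e1131, e1200, e1201, e1210, e1211, e1220, e1221, e1230, e1231, e1300, e1301, e1310, e1311, e1320, e1321, e1330, e1331, e2000, e2001, e2010, e2011, e2020, e2021, e2030, e2031, e2100, e2101, e2110, e2111, e2120, e2121, e2130, e2131, e2200, e2201, e2210, e2211, e2220, e2221, e2230, e2231, e2300, e2301, e2310, e2311, e2320, e2321, e2330, e2331, e3000, e3001, e3010, e3011, e3020, e3021, e3030, e3031, e3100, e3101, e3110, e3111, e3120, e3121, e3130, e3131, e3200, e3201, e3210, e3211, e3220, e3221, e3230, e3231, e3300, e3301, e3310, e3311, e3320, e3321, e3330, e3331]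
    linear_combination ((2) * R 0 2 0 3 + (2) * R 1 2 1 3) * cB + ((-2) * R 0 2 1 2) * cE00 + ((-2) * R 0 3 0 3 + (-2) * R 1 3 1 3) * cE01 + ((-2) * R 1 3 2 3) * cE02 + ((2) * R 1 2 2 3) * cE03 + ((-2) * R 0 2 1 2) * cE11 + ((-2) * R 0 1 1 2) * cE12 + ((-2) * R 0 1 1 3) * cE13 + ((-4) * R 0 2 1 2) * cE22 + ((2) * R 0 1 2 3 + (-4) * R 0 2 1 3) * cE23
  · show (∑ a, ∑ b, ∑ c, R a b c 1 * R a b c 1) = 1 / 4 * normR2 R * kron 1 1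
    rw [hnorm, show kron (1:Fin 4) 1 = 1 from rfl]
    simp only [Fin.sum_univ_four, e0001, e0011, e0021, e0031, e0111, e0121, e0131, e0201, e0211, e0221, e0231, e0301, e0311, e0321, e0331, e1001, e1011, e1021, e1031, e1101, e1111, e1121, e1131, e1201, e1211, e1221, e1231, e1301, e1311, e1321, e1331, e2001, e2011, e2021, e2031, e2101, e2111, e2121, e2131, e2201, e2211, e2221, e2231, e2301, e2311, e2321, e2331, e3001, e3011, e3021, e3031, e3101, e3111, e3121, e3131, e3201, e3211, e3221, e3231, e3301, e3311, e3321, e3331]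
    linear_combination ((2) * R 1 3 1 3 + (-2) * R 2 3 2 3) * cE00 + ((2) * R 0 1 1 2 + (2) * R 0 3 2 3) * cE02 + ((2) * R 0 1 1 3 + (-2) * R 0 2 2 3) * cE03 + ((-2) * R 0 1 0 1 + (-2) * R 0 3 0 3) * cE11 + ((2) * R 0 2 0 2 + (-2) * R 1 2 1 2) * cE22 + ((2) * R 0 2 0 3 + (-2) * R 1 2 1 3) * cE23
  · show (∑ a, ∑ b, ∑ c, R a b c 1 * R a b c 2) = 1 / 4 * normR2 R * kron 1 2
    rw [hnorm, show kron (1:Fin 4) 2 = 0 from rfl]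
    simp only [Fin.sum_univ_four, e0001, e0002, e0011, e0012, e0021, e0022, e0031, e0032, e0111, e0121, e0122, e0131, e0132, e0201, e0211, e0221, e0222, e0231, e0232, e0301, e0302, e0311, e0321, e0322, e0331, e0332, e1001, e1002, e1011, e1012, e1021, e1022, e1031, e1032, e1101, e1102, e1111, e1112, e1121, e1122, e1131, e1132, e1201, e1202, e1211, e1221, e1222, e1231, e1232, e1301, e1302, e1311, e1312, e1321, e1322, e1331, e1332, e2001, e2002, e2011, e2012, e2021, e2022, e2031, e2032, e2101, e2102, e2111, e2112, e2121, e2122, e2131, e2132, e2201, e2202, e2211, e2212, e2221, e2222, e2231, e2232, e2301, e2302, e2311, e2312, e2321, e2322, e2331, e2332, e3001, e3002, e3011, e3012, e3021, e3022, e3031, e3032, e3101, e3102, e3111, e3112, e3121, e3122, e3131, e3132, e3201, e3202, e3211, e3212, e3221, e3222, e3231, e3232, e3301, e3302, e3311, e3312, e3321, e3322, e3331, e3332]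
    linear_combination ((4) * R 1 3 2 3) * cE00 + ((-2) * R 0 3 2 3) * cE01 + ((2) * R 0 2 1 2) * cE02 + ((2) * R 0 1 2 3 + (2) * R 0 2 1 3) * cE03 + ((-2) * R 0 1 0 2) * cE11 + ((-2) * R 0 1 0 1 + (-2) * R 0 2 0 2 + (-2) * R 0 3 0 3 + (2) * R 1 2 1 2) * cE12 + ((2) * R 1 2 1 3) * cE13 + ((-2) * R 0 1 0 2) * cE22 + ((-2) * R 0 1 0 3) * cE23
  · show (∑ a, ∑ b, ∑ c, R a b c 1 * R a b c 3) = 1 / 4 * normR2 R * kron 1 3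
    rw [hnorm, show kron (1:Fin 4) 3 = 0 from rfl]
    simp only [Fin.sum_univ_four, e0001, e0003, e0011, e0013, e0021, e0023, e0031, e0033, e0111, e0121, e0131, e0133, e0201, e0211, e0221, e0231, e0233, e0301, e0311, e0321, e0331, e0333, e1001, e1003, e1011, e1013, e1021, e1023, e1031, e1033, e1101, e1103, e1111, e1113, e1121, e1123, e1131, e1133, e1201, e1203, e1211, e1221, e1231, e1233, e1301, e1303, e1311, e1321, e1331, e1333, e2001, e2003, e2011, e2013, e2021, e2023, e2031, e2033, e2101, e2103, e2111, e2113, e2121, e2123, e2131, e2133, e2201, e2203, e2211, e2213, e2221, e2223, e2231, e2233, e2301, e2303, e2311, e2313, e2321, e2331, e2333, e3001, e3003, e3011, e3013, e3021, e3023, e3031, e3033, e3101, e3103, e3111, e3113, e3121, e3123, e3131, e3133, e3201, e3203, e3211, e3213, e3221, e3223, e3231, e3233, e3301, e3303, e3311, e3313, e3321, e3323, e3331, e3333]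
    linear_combination ((2) * R 0 1 1 2 + (-2) * R 0 3 2 3) * cB + ((-2) * R 1 2 2 3) * cE00 + ((-2) * R 0 1 1 3) * cE01 + ((-4) * R 0 1 2 3 + (2) * R 0 2 1 3) * cE02 + ((-2) * R 0 2 1 2) * cE03 + ((2) * R 0 1 0 3 + (-2) * R 1 2 2 3) * cE11 + ((2) * R 1 2 1 3) * cE12 + ((-2) * R 0 1 0 1 + (-2) * R 1 2 1 2) * cE13 + ((2) * R 0 1 0 3) * cE22 + ((-2) * R 0 1 0 2) * cE23
  · show (∑ a, ∑ b, ∑ c, R a b c 2 * R a b c 0) = 1 / 4 * normR2 R * kron 2 0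
    rw [hnorm, show kron (2:Fin 4) 0 = 0 from rfl]
    simp only [Fin.sum_univ_four, e0000, e0002, e0010, e0012, e0020, e0022, e0030, e0032, e0100, e0110, e0120, e0122, e0130, e0132, e0200, e0210, e0220, e0222, e0230, e0232, e0300, e0302, e0310, e0320, e0322, e0330, e0332, e1000, e1002, e1010, e1012, e1020, e1022, e1030, e1032, e1100, e1102, e1110, e1112, e1120, e1122, e1130, e1132, e1200, e1202, e1210, e1220, e1222, e1230, e1232, e1300, e1302, e1310, e1312, e1320, e1322, e1330, e1332, e2000, e2002, e2010, e2012, e2020, e2022, e2030, e2032, e2100, e2102, e2110, e2112, e2120, e2122, e2130, e2132, e2200, e2202, e2210, e2212, e2220, e2222, e2230, e2232, e2300, e2302, e2310, e2312, e2320, e2322, e2330, e2332, e3000, e3002, e3010, e3012, e3020, e3022, e3030, e3032, e3100, e3102, e3110, e3112, e3120, e3122, e3130, e3132, e3200, e3202, e3210, e3212, e3220, e3222, e3230, e3232, e3300, e3302, e3310, e3312, e3320, e3322, e3330, e3332]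
    linear_combination ((-2) * R 0 1 0 3 + (2) * R 1 2 2 3) * cB + ((-2) * R 0 1 1 2 + (4) * R 0 3 2 3) * cE00 + ((-2) * R 1 3 2 3) * cE01 + ((-2) * R 0 1 0 1 + (-2) * R 0 2 0 2 + (-4) * R 0 3 0 3 + (2) * R 1 2 1 2 + (2) * R 1 3 1 3) * cE02 + ((2) * R 0 2 0 3) * cE03 + ((4) * R 0 1 1 2) * cE11 + ((2) * R 0 2 1 2) * cE12 + ((-4) * R 0 1 2 3 + (2) * R 0 2 1 3) * cE13 + ((2) * R 0 1 1 2) * cE22 + ((2) * R 0 1 1 3) * cE23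
  · show (∑ a, ∑ b, ∑ c, R a b c 2 * R a b c 1) = 1 / 4 * normR2 R * kron 2 1
    rw [hnorm, show kron (2:Fin 4) 1 = 0 from rfl]
    simp only [Fin.sum_univ_four, e0001, e0002, e0011, e0012, e0021, e0022, e0031, e0032, e0111, e0121, e0122, e0131, e0132, e0201, e0211, e0221, e0222, e0231, e0232, e0301, e0302, e0311, e0321, e0322, e0331, e0332, e1001, e1002, e1011, e1012, e1021, e1022, e1031, e1032, e1101, e1102, e1111, e1112, e1121, e1122, e1131, e1132, e1201, e1202, e1211, e1221, e1222, e1231, e1232, e1301, e1302, e1311, e1312, e1321, e1322, e1331, e1332, e2001, e2002, e2011, e2012, e2021, e2022, e2031, e2032, e2101, e2102, e2111, e2112, e2121, e2122, e2131, e2132, e2201, e2202, e2211, e2212, e2221, e2222, e2231, e2232, e2301, e2302, e2311, e2312, e2321, e2322, e2331, e2332, e3001, e3002, e3011, e3012, e3021, e3022, e3031, e3032, e3101, e3102, e3111, e3112, e3121, e3122, e3131, e3132, e3201, e3202, e3211, e3212, e3221, e3222, e3231, e3232, e3301, e3302, e3311, e3312, e3321, e3322, e3331, e3332]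
    linear_combination ((4) * R 1 3 2 3) * cE00 + ((-2) * R 0 3 2 3) * cE01 + ((2) * R 0 2 1 2) * cE02 + ((2) * R 0 1 2 3 + (2) * R 0 2 1 3) * cE03 + ((-2) * R 0 1 0 2) * cE11 + ((-2) * R 0 1 0 1 + (-2) * R 0 2 0 2 + (-2) * R 0 3 0 3 + (2) * R 1 2 1 2) * cE12 + ((2) * R 1 2 1 3) * cE13 + ((-2) * R 0 1 0 2) * cE22 + ((-2) * R 0 1 0 3) * cE23
  · show (∑ a, ∑ b, ∑ c, R a b c 2 * R a b c 2) = 1 / 4 * normR2 R * kron 2 2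
    rw [hnorm, show kron (2:Fin 4) 2 = 1 from rfl]
    simp only [Fin.sum_univ_four, e0002, e0012, e0022, e0032, e0122, e0132, e0222, e0232, e0302, e0322, e0332, e1002, e1012, e1022, e1032, e1102, e1112, e1122, e1132, e1202, e1222, e1232, e1302, e1312, e1322, e1332, e2002, e2012, e2022, e2032, e2102, e2112, e2122, e2132, e2202, e2212, e2222, e2232, e2302, e2312, e2322, e2332, e3002, e3012, e3022, e3032, e3102, e3112, e3122, e3132, e3202, e3212, e3222, e3232, e3302, e3312, e3322, e3332]
    linear_combination ((-2) * R 1 3 1 3 + (2) * R 2 3 2 3) * cE00 + ((-2) * R 0 2 1 2 + (2) * R 0 3 1 3) * cE01 + ((-2) * R 0 1 1 3 + (2) * R 0 2 2 3) * cE03 + ((2) * R 0 1 0 1 + (-2) * R 1 2 1 2) * cE11 + ((2) * R 0 1 0 3 + (2) * R 1 2 2 3) * cE13 + ((-2) * R 0 2 0 2 + (-2) * R 0 3 0 3) * cE22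
  · show (∑ a, ∑ b, ∑ c, R a b c 2 * R a b c 3) = 1 / 4 * normR2 R * kron 2 3
    rw [hnorm, show kron (2:Fin 4) 3 = 0 from rfl]
    simp only [Fin.sum_univ_four, e0002, e0003, e0012, e0013, e0022, e0023, e0032, e0033, e0122, e0132, e0133, e0222, e0232, e0233, e0302, e0322, e0332, e0333, e1002, e1003, e1012, e1013, e1022, e1023, e1032, e1033, e1102, e1103, e1112, e1113, e1122, e1123, e1132, e1133, e1202, e1203, e1222, e1232, e1233, e1302, e1303, e1312, e1322, e1332, e1333, e2002, e2003, e2012, e2013, e2022, e2023, e2032, e2033, e2102, e2103, e2112, e2113, e2122, e2123, e2132, e2133, e2202, e2203, e2212, e2213, e2222, e2223, e2232, e2233, e2302, e2303, e2312, e2313, e2322, e2332, e2333, e3002, e3003, e3012, e3013, e3022, e3023, e3032, e3033, e3102, e3103, e3112, e3113, e3122, e3123, e3132, e3133, e3202, e3203, e3212, e3213, e3222, e3223, e3232, e3233, e3302, e3303, e3312, e3313, e3322, e3323, e3332, e3333]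
    linear_combination ((2) * R 0 2 1 2 + (2) * R 0 3 1 3) * cB + ((2) * R 1 2 1 3) * cE00 + ((2) * R 0 1 2 3 + (-4) * R 0 2 1 3) * cE01 + ((-2) * R 0 2 2 3) * cE02 + ((2) * R 0 1 1 2) * cE03 + ((-2) * R 1 2 1 3) * cE11 + ((-2) * R 1 2 2 3) * cE12 + ((-2) * R 0 1 0 2) * cE13 + ((-2) * R 0 2 0 2 + (-2) * R 0 3 0 3) * cE23
  · show (∑ a, ∑ b, ∑ c, R a b c 3 * R a b c 0) = 1 / 4 * normR2 R * kron 3 0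
    rw [hnorm, show kron (3:Fin 4) 0 = 0 from rfl]
    simp only [Fin.sum_univ_four, e0000, e0003, e0010, e0013, e0020, e0023, e0030, e0033, e0100, e0110, e0120, e0130, e0133, e0200, e0210, e0220, e0230, e0233, e0300, e0310, e0320, e0330, e0333, e1000, e1003, e1010, e1013, e1020, e1023, e1030, e1033, e1100, e1103, e1110, e1113, e1120, e1123, e1130, e1133, e1200, e1203, e1210, e1220, e1230, e1233, e1300, e1303, e1310, e1320, e1330, e1333, e2000, e2003, e2010, e2013, e2020, e2023, e2030, e2033, e2100, e2103, e2110, e2113, e2120, e2123, e2130, e2133, e2200, e2203, e2210, e2213, e2220, e2223, e2230, e2233, e2300, e2303, e2310, e2313, e2320, e2330, e2333, e3000, e3003, e3010, e3013, e3020, e3023, e3030, e3033, e3100, e3103, e3110, e3113, e3120, e3123, e3130, e3133, e3200, e3203, e3210, e3213, e3220, e3223, e3230, e3233, e3300, e3303, e3310, e3313, e3320, e3323, e3330, e3333]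
    linear_combination ((-4) * R 0 1 1 3 + (-4) * R 0 2 2 3) * cE00 + ((2) * R 0 1 0 3) * cE01 + ((2) * R 0 2 0 3) * cE02 + ((-2) * R 0 1 0 1 + (-4) * R 0 2 0 2 + (-2) * R 0 3 0 3 + (2) * R 1 2 1 2 + (2) * R 1 3 1 3) * cE03 + ((2) * R 0 1 1 3) * cE11 + ((2) * R 0 1 2 3 + (2) * R 0 2 1 3) * cE12 + ((-2) * R 0 2 1 2) * cE13 + ((-2) * R 0 1 1 3) * cE22 + ((2) * R 0 1 1 2) * cE23
  · show (∑ a, ∑ b, ∑ c, R a b c 3 * R a b c 1) = 1 / 4 * normR2 R * kron 3 1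
    rw [hnorm, show kron (3:Fin 4) 1 = 0 from rfl]
    simp only [Fin.sum_univ_four, e0001, e0003, e0011, e0013, e0021, e0023, e0031, e0033, e0111, e0121, e0131, e0133, e0201, e0211, e0221, e0231, e0233, e0301, e0311, e0321, e0331, e0333, e1001, e1003, e1011, e1013, e1021, e1023, e1031, e1033, e1101, e1103, e1111, e1113, e1121, e1123, e1131, e1133, e1201, e1203, e1211, e1221, e1231, e1233, e1301, e1303, e1311, e1321, e1331, e1333, e2001, e2003, e2011, e2013, e2021, e2023, e2031, e2033, e2101, e2103, e2111, e2113, e2121, e2123, e2131, e2133, e2201, e2203, e2211, e2213, e2221, e2223, e2231, e2233, e2301, e2303, e2311, e2313, e2321, e2331, e2333, e3001, e3003, e3011, e3013, e3021, e3023, e3031, e3033, e3101, e3103, e3111, e3113, e3121, e3123, e3131, e3133, e3201, e3203, e3211, e3213, e3221, e3223, e3231, e3233, e3301, e3303, e3311, e3313, e3321, e3323, e3331, e3333]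
    linear_combination ((2) * R 0 1 1 2 + (-2) * R 0 3 2 3) * cB + ((-2) * R 1 2 2 3) * cE00 + ((-2) * R 0 1 1 3) * cE01 + ((-4) * R 0 1 2 3 + (2) * R 0 2 1 3) * cE02 + ((-2) * R 0 2 1 2) * cE03 + ((2) * R 0 1 0 3 + (-2) * R 1 2 2 3) * cE11 + ((2) * R 1 2 1 3) * cE12 + ((-2) * R 0 1 0 1 + (-2) * R 1 2 1 2) * cE13 + ((2) * R 0 1 0 3) * cE22 + ((-2) * R 0 1 0 2) * cE23
  · show (∑ a, ∑ b, ∑ c, R a b c 3 * R a b c 2) = 1 / 4 * normR2 R * kron 3 2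
    rw [hnorm, show kron (3:Fin 4) 2 = 0 from rfl]
    simp only [Fin.sum_univ_four, e0002, e0003, e0012, e0013, e0022, e0023, e0032, e0033, e0122, e0132, e0133, e0222, e0232, e0233, e0302, e0322, e0332, e0333, e1002, e1003, e1012, e1013, e1022, e1023, e1032, e1033, e1102, e1103, e1112, e1113, e1122, e1123, e1132, e1133, e1202, e1203, e1222, e1232, e1233, e1302, e1303, e1312, e1322, e1332, e1333, e2002, e2003, e2012, e2013, e2022, e2023, e2032, e2033, e2102, e2103, e2112, e2113, e2122, e2123, e2132, e2133, e2202, e2203, e2212, e2213, e2222, e2223, e2232, e2233, e2302, e2303, e2312, e2313, e2322, e2332, e2333, e3002, e3003, e3012, e3013, e3022, e3023, e3032, e3033, e3102, e3103, e3112, e3113, e3122, e3123, e3132, e3133, e3202, e3203, e3212, e3213, e3222, e3223, e3232, e3233, e3302, e3303, e3312, e3313, e3322, e3323, e3332, e3333]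
    linear_combination ((2) * R 0 2 1 2 + (2) * R 0 3 1 3) * cB + ((2) * R 1 2 1 3) * cE00 + ((2) * R 0 1 2 3 + (-4) * R 0 2 1 3) * cE01 + ((-2) * R 0 2 2 3) * cE02 + ((2) * R 0 1 1 2) * cE03 + ((-2) * R 1 2 1 3) * cE11 + ((-2) * R 1 2 2 3) * cE12 + ((-2) * R 0 1 0 2) * cE13 + ((-2) * R 0 2 0 2 + (-2) * R 0 3 0 3) * cE23
  · show (∑ a, ∑ b, ∑ c, R a b c 3 * R a b c 3) = 1 / 4 * normR2 R * kron 3 3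
    rw [hnorm, show kron (3:Fin 4) 3 = 1 from rfl]
    simp only [Fin.sum_univ_four, e0003, e0013, e0023, e0033, e0133, e0233, e0333, e1003, e1013, e1023, e1033, e1103, e1113, e1123, e1133, e1203, e1233, e1303, e1333, e2003, e2013, e2023, e2033, e2103, e2113, e2123, e2133, e2203, e2213, e2223, e2233, e2303, e2313, e2333, e3003, e3013, e3023, e3033, e3103, e3113, e3123, e3133, e3203, e3213, e3223, e3233, e3303, e3313, e3323, e3333]
    linear_combination ((2) * R 0 2 0 2 + (2) * R 0 3 0 3 + (-2) * R 1 2 1 2 + (2) * R 2 3 2 3) * cE00 + ((2) * R 0 2 1 2 + (-2) * R 0 3 1 3) * cE01 + ((-2) * R 0 1 1 2 + (-2) * R 0 3 2 3) * cE02 + ((2) * R 0 1 0 1 + (2) * R 0 2 0 2 + (2) * R 0 3 0 3 + (-2) * R 1 3 1 3) * cE11 + ((2) * R 0 1 0 2 + (-2) * R 1 3 2 3) * cE12 + ((2) * R 0 2 0 2 + (2) * R 0 3 0 3) * cE22
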